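/- Let q > 1 be an integer and t > 0 a rational number such that q(q-1)t is an integer. Then the n-th digit t^(n) of t in base q is nonzero and takes the same value for all integers n ≥ 2. -/

import Mathlib

/-- If `q > 1` and `t > 0` is a rational number with `q(q-1)t ∈ ℤ`, then the `n`-th digit of
`t` in base `q` is nonzero and constant for all `n ≥ 2`. -/
theorem digit_eventually_constant (q : ℤ) (hq : 1 < q) (t : ℚ) (ht : 0 < t)
    (hint : ∃ z : ℤ, (q : ℚ) * (q - 1) * t = z) :
    ∃ c : ℤ, c ≠ 0 ∧ ∀ n : ℤ, 2 ≤ n →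
      ⌈t * (q : ℚ) ^ n - 1⌉ - q * ⌈t * (q : ℚ) ^ (n - 1) - 1⌉ = c := by
  obtain ⟨z, hz⟩ := hint
  set D : ℤ := q - 1 with hDdef
  have hD0 : (0:ℤ) < D := by omega
  have hDQ : (0:ℚ) < (D:ℚ) := by exact_mod_cast hD0
  have hq0 : (0:ℚ) < (q:ℚ) := by exact_mod_cast (by omega : (0:ℤ) < q)
  have hz0 : (0:ℤ) < z := by
    have : (0:ℚ) < (z:ℚ) := by
      rw [← hz]
      have h1 : (0:ℚ) < (q:ℚ) - 1 := by
        have : (1:ℚ) < (q:ℚ) := by exact_mod_cast hq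
        linarith
      positivity
    exact_mod_cast this
  set r : ℤ := (z - 1) % D + 1 with hrdef
  have hr1 : 1 ≤ r := by
    have := Int.emod_nonneg (z - 1) (by omega : D ≠ 0)
    omega
  have hrD : r ≤ D := by
    have := Int.emod_lt_of_pos (z - 1) hD0
    omega
  have hzr : D ∣ z - r := by
    have h := Int.mul_ediv_add_emod (z - 1) D
    exact ⟨(z - 1) / D, by omega⟩
  -- key formula: for k : ℕ, D * ⌈t * q^(k+1) - 1⌉ = z * q^k - r
  have key : ∀ k : ℕ, D * ⌈t * (q:ℚ) ^ ((k:ℤ) + 1) - 1⌉ = z * q ^ k - r := by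
    intro k
    have hdvd : D ∣ z * q ^ k - r := by
      have h1 : D ∣ q ^ k - 1 := by
        have := sub_dvd_pow_sub_pow q 1 k
        simpa using this
      have : z * q ^ k - r = z * (q ^ k - 1) + (z - r) := by ring
      rw [this]
      exact dvd_add (Dvd.dvd.mul_left h1 z) hzr
    obtain ⟨K, hK⟩ := hdvd
    have hqD : (q:ℚ) * (D:ℚ) * t = (z:ℚ) := by
      rw [← hz]; push_cast [hDdef]; ring
    have hval : t * (q:ℚ) ^ ((k:ℤ) + 1) = (z:ℚ) * (q:ℚ) ^ k / (D:ℚ) := by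
      have hpow : (q:ℚ) ^ ((k:ℤ) + 1) = (q:ℚ) ^ k * (q:ℚ) := by
        rw [zpow_add₀ (ne_of_gt hq0), zpow_natCast, zpow_one]
      rw [hpow, eq_div_iff (ne_of_gt hDQ)]
      linear_combination (q:ℚ) ^ k * hqD
    have hKval : (z:ℚ) * (q:ℚ) ^ k = (D:ℚ) * (K:ℚ) + (r:ℚ) := by
      have : (z * q ^ k : ℤ) = D * K + r := by omega
      exact_mod_cast this
    have hceil : ⌈t * (q:ℚ) ^ ((k:ℤ) + 1) - 1⌉ = K := by
      have hdiv : ((D:ℚ) * (K:ℚ) + (r:ℚ)) / (D:ℚ) = (K:ℚ) + (r:ℚ) / (D:ℚ) := by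
        field_simp
      have hrQ : (0:ℚ) < (r:ℚ) := by exact_mod_cast hr1
      have hrDQ : (r:ℚ) ≤ (D:ℚ) := by exact_mod_cast hrD
      have hpos : (0:ℚ) < (r:ℚ) / (D:ℚ) := div_pos hrQ hDQ
      have hle : (r:ℚ) / (D:ℚ) ≤ 1 := by
        rw [div_le_one hDQ]; exact hrDQ
      rw [Int.ceil_eq_iff]
      constructor
      · rw [hval, hKval, hdiv]; linarith
      · rw [hval, hKval, hdiv]; linarith
    rw [hceil]
    omega
  refine ⟨r, by omega, fun n hn => ?_⟩
  set k : ℕ := (n - 2).toNat with hkdef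
  have hnk : n = (k:ℤ) + 2 := by
    have : ((n - 2).toNat : ℤ) = n - 2 := Int.toNat_of_nonneg (by omega)
    omega
  have h1 := key (k + 1)
  have h2 := key k
  rw [show n = ((k + 1 : ℕ):ℤ) + 1 from by push_cast; omega,
    show ((k + 1 : ℕ):ℤ) + 1 - 1 = (k:ℤ) + 1 from by push_cast; omega]
  have hDne : D ≠ 0 := by omega
  have hfinal : D * (⌈t * (q:ℚ) ^ (((k + 1 : ℕ):ℤ) + 1) - 1⌉ -
      q * ⌈t * (q:ℚ) ^ ((k:ℤ) + 1) - 1⌉) = D * r := by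
    have hp : (q : ℤ) ^ (k + 1) = q ^ k * q := pow_succ q k
    linear_combination h1 - q * h2 - r * hDdef + z * hp
  exact mul_left_cancel₀ hDne hfinal
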